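/- Let h₁, …, hₙ : ℝ → ℝ be continuous and bounded above by affine functions and x₀ ∈ ℝ. Define d★ as the infimum of φ₁(x₀) over all tuples (φ₁,…,φₙ) of concave functions ℝ → ℝ satisfying φₙ ≥ hₙ and φₖ ≥ hₖ + φₖ₊₁ pointwise for k < n. Then d★ is attained and equals φ₁★(x₀), where φ₁★ is defined by iterated concave envelopes: φₙ★ = concave envelope of hₙ, φₖ★ = concave envelope of (hₖ + φₖ₊₁★). -/
import Mathlib


/-- The concave envelope of `h`: the pointwise infimum of all concave functions dominating `h`. -/
noncomputable def concaveEnvelope (h : ℝ → ℝ) : ℝ → ℝ := fun x =>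
  sInf {v : ℝ | ∃ g : ℝ → ℝ, ConcaveOn ℝ Set.univ g ∧ (∀ z, h z ≤ g z) ∧ g x = v}

lemma affine_concaveOn (a b : ℝ) : ConcaveOn ℝ Set.univ (fun x => a + b * x) := by
  refine ⟨convex_univ, ?_⟩
  intro x _ y _ s t hs ht hst
  simp only [smul_eq_mul]
  linear_combination a * hst

lemma env_bddBelow (h : ℝ → ℝ) (x : ℝ) :
    (h x) ∈ lowerBounds {v : ℝ | ∃ g : ℝ → ℝ, ConcaveOn ℝ Set.univ g ∧ (∀ z, h z ≤ g z) ∧ g x = v} := by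
  rintro v ⟨g', _, hd, rfl⟩
  exact hd x

lemma concaveEnvelope_le {h g : ℝ → ℝ} (hg : ConcaveOn ℝ Set.univ g)
    (hdom : ∀ z, h z ≤ g z) (x : ℝ) : concaveEnvelope h x ≤ g x :=
  csInf_le ⟨h x, env_bddBelow h x⟩ ⟨g, hg, hdom, rfl⟩

lemma le_concaveEnvelope {h g : ℝ → ℝ} (hg : ConcaveOn ℝ Set.univ g)
    (hdom : ∀ z, h z ≤ g z) (x : ℝ) : h x ≤ concaveEnvelope h x :=
  le_csInf ⟨g x, g, hg, hdom, rfl⟩ (env_bddBelow h x)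

lemma concaveEnvelope_concaveOn {h g : ℝ → ℝ} (hg : ConcaveOn ℝ Set.univ g)
    (hdom : ∀ z, h z ≤ g z) : ConcaveOn ℝ Set.univ (concaveEnvelope h) := by
  refine ⟨convex_univ, ?_⟩
  intro x _ y _ s t hs ht hst
  refine le_csInf ⟨g (s • x + t • y), g, hg, hdom, rfl⟩ ?_
  rintro v ⟨g', hg', hd', rfl⟩
  calc s • concaveEnvelope h x + t • concaveEnvelope h y
      ≤ s • g' x + t • g' y :=
        add_le_add
          (smul_le_smul_of_nonneg_left
            (csInf_le ⟨h x, env_bddBelow h x⟩ ⟨g', hg', hd', rfl⟩) hs)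
          (smul_le_smul_of_nonneg_left
            (csInf_le ⟨h y, env_bddBelow h y⟩ ⟨g', hg', hd', rfl⟩) ht)
    _ ≤ g' (s • x + t • y) := hg'.2 trivial trivial hs ht hst

/-- The dual value `d★ = inf φ₁(x₀)` over all admissible tuples of concave functions
(`φₙ ≥ hₙ`, `φₖ ≥ hₖ + φₖ₊₁`) is attained and equals the iterated-concave-envelope
value `φ₁★(x₀)`: i.e. `φ₁★(x₀)` is the least element of the set of admissible values. -/
theorem dual_attained_eq_iterated_concave_envelope (n : ℕ) (hn : 1 ≤ n)
    (h : ℕ → ℝ → ℝ) (hcont : ∀ k, 1 ≤ k → k ≤ n → Continuous (h k))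
    (α β : ℕ → ℝ) (hb : ∀ k, 1 ≤ k → k ≤ n → ∀ x, h k x ≤ α k + β k * x)
    (φs : ℕ → ℝ → ℝ) (hφn : φs n = concaveEnvelope (h n))
    (hφk : ∀ k, 1 ≤ k → k < n → φs k = concaveEnvelope (fun y => h k y + φs (k + 1) y))
    (x₀ : ℝ) :
    IsLeast {r : ℝ | ∃ φ : ℕ → ℝ → ℝ,
        (∀ k, 1 ≤ k → k ≤ n → ConcaveOn ℝ Set.univ (φ k)) ∧
        (∀ y, h n y ≤ φ n y) ∧
        (∀ k, 1 ≤ k → k < n → ∀ y, h k y + φ (k + 1) y ≤ φ k y) ∧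
        r = φ 1 x₀}
      (φs 1 x₀) := by
  -- Q k : φs k is concave and dominates its target
  have Q : ∀ m k, 1 ≤ k → n = k + m →
      ConcaveOn ℝ Set.univ (φs k) ∧
      ((k = n → ∀ y, h n y ≤ φs k y) ∧ (k < n → ∀ y, h k y + φs (k+1) y ≤ φs k y)) := by
    intro m
    induction m with
    | zero =>
      intro k hk1 hkn
      have hkn' : k = n := by omega
      subst hkn'
      rw [hφn]
      have haff : ∀ z, h k z ≤ (fun x => α k + β k * x) z := hb k hk1 le_rfl
      have hc := affine_concaveOn (α k) (β k)
      refine ⟨concaveEnvelope_concaveOn hc haff, fun _ => le_concaveEnvelope hc haff,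
        fun hlt => absurd hlt (lt_irrefl k)⟩
    | succ m ih =>
      intro k hk1 hkn
      have hklt : k < n := by omega
      obtain ⟨ihc, -⟩ := ih (k+1) (by omega) (by omega)
      rw [hφk k hk1 hklt]
      have hc : ConcaveOn ℝ Set.univ (fun x => (α k + β k * x) + φs (k+1) x) :=
        (affine_concaveOn (α k) (β k)).add ihc
      have hdom : ∀ z, h k z + φs (k+1) z ≤ (α k + β k * z) + φs (k+1) z := by
        intro z
        have := hb k hk1 hklt.le z
        linarith
      refine ⟨concaveEnvelope_concaveOn hc hdom, fun heq => absurd heq (by omega),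
        fun _ y => le_concaveEnvelope hc hdom y⟩
  constructor
  · -- membership: φs itself is admissible
    refine ⟨φs, ?_, ?_, ?_, rfl⟩
    · intro k hk1 hkn
      exact (Q (n - k) k hk1 (by omega)).1
    · have := (Q 0 n hn (by omega)).2.1
      exact this rfl
    · intro k hk1 hklt y
      exact (Q (n - k) k hk1 (by omega)).2.2 hklt y
  · -- lower bound
    rintro r ⟨φ, hφc, hφn', hφk', rfl⟩
    -- φs k ≤ φ k pointwise, downward induction
    have key : ∀ m k, 1 ≤ k → n = k + m → ∀ y, φs k y ≤ φ k y := by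
      intro m
      induction m with
      | zero =>
        intro k hk1 hkn y
        have hkn' : k = n := by omega
        subst hkn'
        rw [hφn]
        exact concaveEnvelope_le (hφc k hk1 le_rfl) hφn' y
      | succ m ih =>
        intro k hk1 hkn y
        have hklt : k < n := by omega
        rw [hφk k hk1 hklt]
        refine concaveEnvelope_le (hφc k hk1 hklt.le) (fun z => ?_) y
        have h1 := ih (k+1) (by omega) (by omega) z
        have h2 := hφk' k hk1 hklt z
        linarith
    exact key (n - 1) 1 le_rfl (by omega) x₀
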